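/- Let K_t = Φ^T Φ and K_{t+1} be its bordering by k̄ = Φ^T φ and k = φ^T φ. For any index i ∈ {1,…,t} and γ > 0, the ridge leverage scores satisfy τ_{i,t+1}(γ) ≤ τ_{i,t}(γ), i.e., ridge leverage scores are monotonically non-increasing as new columns are added. More precisely, τ_{i,t+1}/τ_{i,t} = 1 - γ (k̄^T (K_t + γI)^{-1} e_i)^2 / (ξ · τ_{i,t}), where ξ = k + γ - k̄^T (K_t + γI)^{-1} k̄ ≥ γ. -/

import Mathlib

open Matrix

private lemma unitMul {n : Type*} [Fintype n] (c : ℝ) (M : Matrix Unit n ℝ) :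
    (Matrix.of fun (_ _ : Unit) => c) * M = c • M := by
  ext u j
  simp [Matrix.mul_apply]

private lemma dot_self_nonneg {n : ℕ} (v : Fin n → ℝ) : 0 ≤ v ⬝ᵥ v :=
  Finset.sum_nonneg fun _ _ => mul_self_nonneg _

set_option maxHeartbeats 1000000 in
/-- Ridge leverage scores are monotonically non-increasing under bordering, with the precise
identity τ_{i,t+1} = τ_{i,t} - γ (k̄ᵀ(K_t+γI)⁻¹e_i)² / ξ, where ξ ≥ γ. -/
theorem rls_monotone_decrease {D t : ℕ} (Φ : Matrix (Fin D) (Fin t) ℝ)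
    (φ : Fin D → ℝ) (γ : ℝ) (hγ : 0 < γ) (i : Fin t) :
    let K : Matrix (Fin t) (Fin t) ℝ := Φᵀ * Φ
    let kb : Fin t → ℝ := Φᵀ *ᵥ φ
    let k : ℝ := φ ⬝ᵥ φ
    let K' : Matrix (Fin t ⊕ Unit) (Fin t ⊕ Unit) ℝ :=
      Matrix.fromBlocks K (Matrix.of fun i _ => kb i) (Matrix.of fun _ j => kb j)
        (Matrix.of fun _ _ => k)
    let ξ : ℝ := k + γ - kb ⬝ᵥ ((K + γ • 1)⁻¹ *ᵥ kb)
    let τt : ℝ := (K * (K + γ • 1)⁻¹) i i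
    let τt1 : ℝ := (K' * (K' + γ • 1)⁻¹) (Sum.inl i) (Sum.inl i)
    γ ≤ ξ ∧
    τt1 = τt - γ * (kb ⬝ᵥ ((K + γ • 1)⁻¹ *ᵥ Pi.single i 1)) ^ 2 / ξ ∧
    τt1 ≤ τt := by
  intro K kb k K' ξ τt τt1
  set A : Matrix (Fin t) (Fin t) ℝ := K + γ • 1 with hA
  -- Positive definiteness and invertibility of A
  have hKsd : K.PosSemidef := by
    have := Matrix.posSemidef_conjTranspose_mul_self Φ
    simpa [Matrix.conjTranspose_eq_transpose_of_trivial] using this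
  have hγI : Matrix.PosDef (γ • (1 : Matrix (Fin t) (Fin t) ℝ)) := by
    rw [smul_one_eq_diagonal]
    exact Matrix.posDef_diagonal_iff.mpr fun _ => hγ
  have hApd : A.PosDef := Matrix.PosDef.posSemidef_add hKsd hγI
  have hAdet : IsUnit A.det := (Matrix.isUnit_iff_isUnit_det A).1 hApd.isUnit
  have hAA : A * A⁻¹ = 1 := Matrix.mul_nonsing_inv A hAdet
  have hAT : Aᵀ = A := by
    have := hApd.isHermitian
    simpa [Matrix.IsHermitian, Matrix.conjTranspose_eq_transpose_of_trivial] using this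
  have hAiT : (A⁻¹)ᵀ = A⁻¹ := by rw [Matrix.transpose_nonsing_inv, hAT]
  set v : Fin t → ℝ := A⁻¹ *ᵥ kb with hv
  have hAv : A *ᵥ v = kb := by rw [hv, Matrix.mulVec_mulVec, hAA, Matrix.one_mulVec]
  have hvec : kb ᵥ* A⁻¹ = v := by rw [← hAiT, Matrix.vecMul_transpose]
  have hKv : K *ᵥ v = kb - γ • v := by
    have hKA : K = A - γ • 1 := by rw [hA, add_sub_cancel_right]
    rw [hKA, Matrix.sub_mulVec, hAv, Matrix.smul_mulVec, Matrix.one_mulVec]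
  -- ξ ≥ γ
  have hξdef : ξ = k + γ - kb ⬝ᵥ v := rfl
  have hkdef : k = φ ⬝ᵥ φ := rfl
  have hkbdef : kb = Φᵀ *ᵥ φ := rfl
  set w : Fin D → ℝ := φ - Φ *ᵥ v with hw
  have h1 : φ ⬝ᵥ (Φ *ᵥ v) = kb ⬝ᵥ v := by
    rw [Matrix.dotProduct_mulVec, hkbdef, Matrix.mulVec_transpose]
  have h2 : (Φ *ᵥ v) ⬝ᵥ (Φ *ᵥ v) = v ⬝ᵥ kb - γ * (v ⬝ᵥ v) := by
    rw [Matrix.dotProduct_mulVec (Φ *ᵥ v), ← Matrix.mulVec_transpose,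
      Matrix.mulVec_mulVec]
    have : Φᵀ * Φ = K := rfl
    rw [this, hKv]
    simp [sub_dotProduct, smul_dotProduct, dotProduct_comm kb v]
  have he : w ⬝ᵥ w = k - kb ⬝ᵥ v - γ * (v ⬝ᵥ v) := by
    rw [hw]
    simp only [dotProduct_sub, sub_dotProduct, h1, h2]
    rw [dotProduct_comm (Φ *ᵥ v) φ, h1, dotProduct_comm v kb, hkdef]
    ring
  have hγξ : γ ≤ ξ := by
    have hwnn := dot_self_nonneg w
    have hvnn := dot_self_nonneg v
    nlinarith
  have hξpos : (0:ℝ) < ξ := lt_of_lt_of_le hγ hγξ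
  have hξ0 : ξ ≠ 0 := ne_of_gt hξpos
  -- block inverse
  have hK'def : K' = fromBlocks K (replicateCol Unit kb) (replicateRow Unit kb) (of fun _ _ => k) := rfl
  have hKA' : K' + γ • 1 =
      fromBlocks A (replicateCol Unit kb) (replicateRow Unit kb) (of fun _ _ => k + γ) := by
    have hbr : (of fun (_ _ : Unit) => k) + γ • (1 : Matrix Unit Unit ℝ) =
        of fun (_ _ : Unit) => k + γ := by
      ext u u'
      simp [Matrix.one_apply]
    rw [hK'def, ← Matrix.fromBlocks_one, Matrix.fromBlocks_smul, Matrix.fromBlocks_add]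
    simp only [smul_zero, add_zero]
    rw [← hA, hbr]
  have h11 : A * (A⁻¹ + ξ⁻¹ • (replicateCol Unit v * replicateRow Unit v)) +
      (replicateCol Unit kb) * ((-ξ⁻¹) • replicateRow Unit v) = 1 := by
    rw [Matrix.mul_add, hAA, Matrix.mul_smul, ← Matrix.mul_assoc, ← Matrix.replicateCol_mulVec, hAv,
      Matrix.mul_smul, neg_smul]
    simp
  have h12 : A * ((-ξ⁻¹) • replicateCol Unit v) + (replicateCol Unit kb) * (ξ⁻¹ • (1 : Matrix Unit Unit ℝ)) = 0 := by
    have h1' : (replicateCol Unit kb) * (ξ⁻¹ • (1 : Matrix Unit Unit ℝ)) = ξ⁻¹ • replicateCol Unit kb := by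
      rw [Matrix.mul_smul, Matrix.mul_one]
    have h2' : A * ((-ξ⁻¹) • replicateCol Unit v) = (-ξ⁻¹) • replicateCol Unit kb := by
      rw [Matrix.mul_smul, ← Matrix.replicateCol_mulVec, hAv]
    rw [h1', h2', neg_smul, neg_add_cancel]
  have hr : replicateRow Unit kb * A⁻¹ = replicateRow Unit v := by rw [← Matrix.replicateRow_vecMul, hvec]
  have h21 : (replicateRow Unit kb) * (A⁻¹ + ξ⁻¹ • (replicateCol Unit v * replicateRow Unit v)) +
      (of fun (_ _ : Unit) => k + γ) * ((-ξ⁻¹) • replicateRow Unit v) = 0 := by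
    rw [Matrix.mul_add, hr, Matrix.mul_smul, ← Matrix.mul_assoc, Matrix.replicateRow_mul_replicateCol,
      Matrix.mul_smul, unitMul, unitMul]
    rw [smul_smul, smul_smul]
    have hc : (1:ℝ) + ξ⁻¹ * (kb ⬝ᵥ v) + (-ξ⁻¹) * (k + γ) = 0 := by
      have : ξ⁻¹ * ξ = 1 := inv_mul_cancel₀ hξ0
      rw [hξdef] at this
      nlinarith [this]
    calc replicateRow Unit v + (ξ⁻¹ * (kb ⬝ᵥ v)) • replicateRow Unit v + ((-ξ⁻¹) * (k + γ)) • replicateRow Unit v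
        = ((1:ℝ) + ξ⁻¹ * (kb ⬝ᵥ v) + (-ξ⁻¹) * (k + γ)) • replicateRow Unit v := by
          rw [add_smul, add_smul, one_smul]
      _ = 0 := by rw [hc, zero_smul]
  have h22 : (replicateRow Unit kb) * ((-ξ⁻¹) • replicateCol Unit v) +
      (of fun (_ _ : Unit) => k + γ) * (ξ⁻¹ • (1 : Matrix Unit Unit ℝ)) = 1 := by
    rw [Matrix.mul_smul, Matrix.replicateRow_mul_replicateCol, Matrix.mul_smul, Matrix.mul_one]
    ext u u'
    have : ξ⁻¹ * ξ = 1 := inv_mul_cancel₀ hξ0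
    rw [hξdef] at this
    simp [Matrix.one_apply]
    nlinarith [this]
  have hprod : (fromBlocks A (replicateCol Unit kb) (replicateRow Unit kb) (of fun _ _ => k + γ)) *
      (fromBlocks (A⁻¹ + ξ⁻¹ • (replicateCol Unit v * replicateRow Unit v)) ((-ξ⁻¹) • replicateCol Unit v)
        ((-ξ⁻¹) • replicateRow Unit v) (ξ⁻¹ • 1)) = 1 := by
    rw [Matrix.fromBlocks_multiply, h11, h12, h21, h22, Matrix.fromBlocks_one]
  have hinv : (K' + γ • 1)⁻¹ =
      fromBlocks (A⁻¹ + ξ⁻¹ • (replicateCol Unit v * replicateRow Unit v)) ((-ξ⁻¹) • replicateCol Unit v)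
        ((-ξ⁻¹) • replicateRow Unit v) (ξ⁻¹ • 1) := by
    rw [hKA']
    exact Matrix.inv_eq_right_inv hprod
  -- compute τt1
  have hblock : K * (A⁻¹ + ξ⁻¹ • (replicateCol Unit v * replicateRow Unit v)) +
      (replicateCol Unit kb) * ((-ξ⁻¹) • replicateRow Unit v) =
      K * A⁻¹ + (-(γ * ξ⁻¹)) • (replicateCol Unit v * replicateRow Unit v) := by
    have hcol : replicateCol Unit (kb - γ • v) = replicateCol Unit kb - γ • replicateCol Unit v := by
      ext a b; simp [Matrix.replicateCol]
    rw [Matrix.mul_add, Matrix.mul_smul, ← Matrix.mul_assoc, ← Matrix.replicateCol_mulVec, hKv,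
      Matrix.mul_smul, hcol, Matrix.sub_mul, Matrix.smul_mul]
    module
  have hτt1 : τt1 = (K * A⁻¹) i i + (-(γ * ξ⁻¹)) * (v i * v i) := by
    have : τt1 = (K' * (K' + γ • 1)⁻¹) (Sum.inl i) (Sum.inl i) := rfl
    rw [this, hinv, hK'def, Matrix.fromBlocks_multiply]
    rw [Matrix.fromBlocks_apply₁₁, hblock]
    simp [Matrix.mul_apply, Matrix.replicateCol, Matrix.replicateRow]
  have hvi : kb ⬝ᵥ (A⁻¹ *ᵥ Pi.single i 1) = v i := by
    rw [Matrix.dotProduct_mulVec, hvec, dotProduct_single, mul_one]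
  have hτt : τt = (K * A⁻¹) i i := rfl
  refine ⟨hγξ, ?_, ?_⟩
  · rw [hτt1, hvi, hτt]
    field_simp
    ring
  · rw [hτt1, hτt]
    have h0 : 0 ≤ γ * ξ⁻¹ * (v i * v i) :=
      mul_nonneg (mul_nonneg hγ.le (inv_pos.mpr hξpos).le) (mul_self_nonneg _)
    linarith
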